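/- Let M_n be the set of symmetric n×n integer matrices with off-diagonal entries in {0,1} and diagonal entries in {0,1,2,3}. For A ∈ M_n define the equatorial state |φ_A⟩ = 2^{−n/2} Σ_{x∈{0,1}ⁿ} i^{xAxᵀ}|x⟩. Then E_A[|φ_A⟩⟨φ_A|] = 2^{−n}·I, where A is drawn uniformly from M_n; hence for any vector ψ ∈ ℂ^{2ⁿ}, E_A[2ⁿ|⟨φ_A|ψ⟩|²] = ‖ψ‖². -/

import Mathlib

open scoped BigOperators ComplexConjugate

/-- Data parametrizing the set `M_n` of symmetric `n×n` integer matrices with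
off-diagonal entries in `{0,1}` and diagonal entries in `{0,1,2,3}`: a diagonal in
`Fin 4` and (via the strict upper triangle) off-diagonal bits.  Drawing the data
uniformly draws the corresponding matrix uniformly from `M_n`. -/
abbrev Mdata (n : ℕ) := (Fin n → Fin 4) × (Fin n → Fin n → Bool)

/-- The matrix in `M_n` corresponding to the data `D`. -/
def mdataMatrix {n : ℕ} (D : Mdata n) : Matrix (Fin n) (Fin n) ℤ :=
  Matrix.of fun i j =>
    if i = j then (D.1 i : ℤ) else (if D.2 (min i j) (max i j) then 1 else 0)

/-- The equatorial state `|φ_A⟩ = 2^{−n/2} Σ_x i^{xAxᵀ} |x⟩` for `A = mdataMatrix D`. -/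
noncomputable def equatorial {n : ℕ} (D : Mdata n) : (Fin n → Bool) → ℂ :=
  fun x => ((Real.sqrt (2 ^ n) : ℝ) : ℂ)⁻¹ *
    Complex.I ^ (∑ i, ∑ j,
      (if x i then 1 else 0 : ℤ) * mdataMatrix D i j * (if x j then 1 else 0))

namespace EqAux

/-- The quadratic form `x A xᵀ` for `A = mdataMatrix D`. -/
noncomputable def Q {n : ℕ} (D : Mdata n) (x : Fin n → Bool) : ℤ :=
  ∑ i, ∑ j, (if x i then 1 else 0 : ℤ) * mdataMatrix D i j * (if x j then 1 else 0)

/-- The off-diagonal part of the quadratic form. -/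
noncomputable def R {n : ℕ} (b : Fin n → Fin n → Bool) (x : Fin n → Bool) : ℤ :=
  ∑ i, ∑ j, if i = j then 0 else
    (if x i then 1 else 0 : ℤ) * (if b (min i j) (max i j) then 1 else 0) * (if x j then 1 else 0)

lemma equatorial_eq {n : ℕ} (D : Mdata n) (x : Fin n → Bool) :
    equatorial D x = ((Real.sqrt (2 ^ n) : ℝ) : ℂ)⁻¹ * Complex.I ^ (Q D x) := rfl

lemma Q_decomp {n : ℕ} (D : Mdata n) (x : Fin n → Bool) :
    Q D x = (∑ i, (D.1 i : ℤ) * (if x i then 1 else 0)) + R D.2 x := by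
  have point : ∀ i j : Fin n,
      (if x i then 1 else 0 : ℤ) * mdataMatrix D i j * (if x j then 1 else 0)
      = (if j = i then (D.1 i : ℤ) * (if x i then 1 else 0) else 0)
        + (if i = j then 0 else
            (if x i then 1 else 0 : ℤ) * (if D.2 (min i j) (max i j) then 1 else 0)
              * (if x j then 1 else 0)) := by
    intro i j
    by_cases h : i = j
    · subst h
      simp only [mdataMatrix, Matrix.of_apply, if_pos rfl]
      cases x i <;> simp
    · simp [mdataMatrix, h, Ne.symm h]
  unfold Q R
  simp_rw [point, Finset.sum_add_distrib, Finset.sum_ite_eq' Finset.univ, Finset.mem_univ,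
    if_true]

lemma I_zpow_sum {α : Type*} (s : Finset α) (f : α → ℤ) :
    Complex.I ^ (∑ i ∈ s, f i) = ∏ i ∈ s, Complex.I ^ f i := by
  induction s using Finset.cons_induction with
  | empty => simp
  | cons a s ha ih =>
    rw [Finset.sum_cons, Finset.prod_cons, zpow_add₀ Complex.I_ne_zero, ih]

lemma sum4 (k : ℤ) (hk : k = 1 ∨ k = -1) : ∑ a : Fin 4, Complex.I ^ ((a:ℤ) * k) = 0 := by
  have h1 : Complex.I ^ (1:ℤ) = Complex.I := zpow_one _
  have h2 : Complex.I ^ (2:ℤ) = -1 := by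
    rw [show (2:ℤ) = ((2:ℕ):ℤ) from rfl, zpow_natCast, Complex.I_sq]
  have h3 : Complex.I ^ (3:ℤ) = -Complex.I := by
    rw [show (3:ℤ) = 2 + 1 from rfl, zpow_add₀ Complex.I_ne_zero, h1, h2]; ring
  have hn : ∀ m : ℤ, Complex.I ^ (-m) = (Complex.I ^ m)⁻¹ := fun m => zpow_neg _ m
  have hinv : Complex.I⁻¹ = -Complex.I := Complex.inv_I
  rcases hk with rfl | rfl <;>
    simp only [Fin.sum_univ_four, mul_one, mul_neg,
      show ((3:Fin 4):ℤ) = 3 from rfl, show ((2:Fin 4):ℤ) = 2 from rfl,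
      show ((1:Fin 4):ℤ) = 1 from rfl, show ((0:Fin 4):ℤ) = 0 from rfl,
      hn, zpow_zero, h1, h2, h3] <;> simp [inv_neg, hinv]

lemma key (n : ℕ) (x y : Fin n → Bool) :
    ((Fintype.card (Mdata n) : ℂ))⁻¹ *
        ∑ D : Mdata n, equatorial D x * conj (equatorial D y)
      = if x = y then ((2 : ℂ) ^ n)⁻¹ else 0 := by
  have hI := Complex.I_ne_zero
  have hterm : ∀ D : Mdata n, equatorial D x * conj (equatorial D y)
      = ((2:ℂ)^n)⁻¹ * Complex.I ^ (Q D x - Q D y) := by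
    intro D
    rw [equatorial_eq, equatorial_eq, map_mul, map_inv₀, Complex.conj_ofReal,
      map_zpow₀, Complex.conj_I]
    have h1 : (-Complex.I) ^ (Q D y) = Complex.I ^ (-(Q D y)) := by
      rw [← Complex.inv_I, inv_zpow, zpow_neg]
    rw [h1, mul_mul_mul_comm, ← zpow_add₀ hI, ← sub_eq_add_neg,
      ← mul_inv, ← Complex.ofReal_mul, Real.mul_self_sqrt (by positivity)]
    norm_num
  simp_rw [hterm]
  rw [← Finset.mul_sum]
  by_cases hxy : x = y
  · subst hxy
    simp only [sub_self, zpow_zero, Finset.sum_const, Finset.card_univ, nsmul_eq_mul,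
      mul_one, if_pos rfl]
    rw [if_true]
    have hc : (Fintype.card (Mdata n) : ℂ) ≠ 0 := Nat.cast_ne_zero.mpr Fintype.card_ne_zero
    field_simp
  · rw [if_neg hxy]
    have hsum : ∑ D : Mdata n, Complex.I ^ (Q D x - Q D y) = 0 := by
      obtain ⟨i₀, hi₀⟩ := Function.ne_iff.mp hxy
      rw [Fintype.sum_prod_type, Finset.sum_comm]
      apply Finset.sum_eq_zero
      intro b _
      have hQ : ∀ d : Fin n → Fin 4, Q (d, b) x - Q (d, b) y
          = (∑ i, (d i : ℤ) * ((if x i then 1 else 0) - (if y i then 1 else 0)))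
            + (R b x - R b y) := by
        intro d
        rw [Q_decomp, Q_decomp]
        rw [show ∀ a b c e : ℤ, (a+b)-(c+e) = (a-c)+(b-e) from by intros; ring]
        congr 1
        rw [← Finset.sum_sub_distrib]
        exact Finset.sum_congr rfl fun i _ => (mul_sub _ _ _).symm
      simp_rw [hQ, zpow_add₀ hI, ← Finset.sum_mul, I_zpow_sum]
      have hprod : (∑ d : Fin n → Fin 4, ∏ i,
            Complex.I ^ ((d i : ℤ) * ((if x i then 1 else 0) - (if y i then 1 else 0))))
          = ∏ i, ∑ a : Fin 4,
            Complex.I ^ ((a : ℤ) * ((if x i then 1 else 0) - (if y i then 1 else 0))) := by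
        rw [Finset.prod_univ_sum, Fintype.piFinset_univ]
      rw [hprod, Finset.prod_eq_zero (Finset.mem_univ i₀), zero_mul]
      apply sum4
      cases hx : x i₀ <;> cases hy : y i₀ <;> simp_all
    rw [hsum, mul_zero, mul_zero]

end EqAux

/-- First moment of uniformly random equatorial states:
`E_A[|φ_A⟩⟨φ_A|] = 2^{−n} I`, and hence `E_A[2ⁿ|⟨φ_A|ψ⟩|²] = ‖ψ‖²` for all `ψ`. -/
theorem equatorial_first_moment (n : ℕ) :
    (∀ x y : Fin n → Bool,
      ((Fintype.card (Mdata n) : ℂ))⁻¹ *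
          ∑ D : Mdata n, equatorial D x * conj (equatorial D y)
        = if x = y then ((2 : ℂ) ^ n)⁻¹ else 0)
    ∧ ∀ ψ : (Fin n → Bool) → ℂ,
      ((Fintype.card (Mdata n) : ℝ))⁻¹ *
          ∑ D : Mdata n, 2 ^ n * ‖∑ x, conj (equatorial D x) * ψ x‖ ^ 2
        = ∑ x, ‖ψ x‖ ^ 2 := by
  refine ⟨EqAux.key n, fun ψ => ?_⟩
  apply Complex.ofReal_injective
  have hz : ∀ z : ℂ, ((‖z‖:ℝ):ℂ)^2 = z * conj z := fun z => by
    rw [Complex.mul_conj, ← Complex.ofReal_pow, Complex.sq_norm]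
  push_cast [hz]
  have expand : ∀ D : Mdata n,
      (∑ x, conj (equatorial D x) * ψ x) * conj (∑ x, conj (equatorial D x) * ψ x)
      = ∑ x, ∑ y, (ψ x * conj (ψ y)) * (equatorial D y * conj (equatorial D x)) := by
    intro D
    rw [map_sum, Finset.sum_mul_sum]
    refine Finset.sum_congr rfl fun x _ => Finset.sum_congr rfl fun y _ => ?_
    rw [map_mul, Complex.conj_conj]
    ring
  simp_rw [expand]
  rw [Finset.mul_sum]
  simp_rw [Finset.mul_sum]
  rw [Finset.sum_comm]
  refine Eq.trans (Finset.sum_congr rfl fun x _ => Finset.sum_comm) ?_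
  have step : ∀ x y : Fin n → Bool,
      ∑ D : Mdata n, ((Fintype.card (Mdata n):ℂ))⁻¹ * ((2:ℂ)^n *
          ((ψ x * conj (ψ y)) * (equatorial D y * conj (equatorial D x))))
      = if y = x then ψ x * conj (ψ y) else 0 := by
    intro x y
    have h := EqAux.key n y x
    have c0 : ∀ z : ℂ, ((Fintype.card (Mdata n):ℂ))⁻¹ * ((2:ℂ)^n * ((ψ x * conj (ψ y)) * z))
        = ((2:ℂ)^n * (ψ x * conj (ψ y)) * ((Fintype.card (Mdata n):ℂ))⁻¹) * z := fun z => by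
      ring
    simp_rw [c0]
    rw [← Finset.mul_sum, mul_assoc]
    rw [h]
    by_cases hyx : y = x
    · rw [if_pos hyx, if_pos hyx]
      field_simp
    · rw [if_neg hyx, if_neg hyx, mul_zero]
  simp_rw [step]
  refine Finset.sum_congr rfl fun x _ => ?_
  rw [Finset.sum_ite_eq' Finset.univ x (fun y => ψ x * conj (ψ y)), if_pos (Finset.mem_univ x)]
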